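/- For the point set X = {0, 2, 4, …, 2k} ∪ {2k+1, 2k+2, …, 3k} on the real line with the complete set of ordinal constraints 𝒯 = {(u,v,w) : |u−v| < |u−w|}, the identity map satisfies all constraints, but the map g sending the i-th smallest point to i violates at least c·k³ constraints for some absolute constant c > 0 and all sufficiently large k. -/

import Mathlib

open Fin.NatCast

private lemma abs_cast_sub' (x y : ℕ) :
    |(x : ℝ) - (y : ℝ)| = (((x : ℤ) - (y : ℤ)).natAbs : ℝ) := by
  rw [Nat.cast_natAbs]
  push_cast
  rfl

/-- The ordering of the points alone is not enough: for the point set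
{0,2,…,2k} ∪ {2k+1,…,3k}, the identity embedding satisfies all constraints but
the rank embedding violates Ω(k³) constraints. -/
theorem rank_embedding_violates_many :
    ∃ c : ℝ, 0 < c ∧ ∃ K : ℕ, ∀ k : ℕ, K ≤ k →
      ∀ pts : Fin (2 * k + 1) → ℝ,
        (pts = fun i : Fin (2 * k + 1) => ((if (i : ℕ) ≤ k then 2 * (i : ℕ) else k + (i : ℕ) : ℕ) : ℝ)) →
        ∀ T : Set (Fin (2 * k + 1) × Fin (2 * k + 1) × Fin (2 * k + 1)),
          (T = {t | (t.1 ≠ t.2.1 ∧ t.1 ≠ t.2.2 ∧ t.2.1 ≠ t.2.2) ∧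
                |pts t.1 - pts t.2.1| < |pts t.1 - pts t.2.2|}) →
          (∀ t ∈ T, |pts t.1 - pts t.2.1| < |pts t.1 - pts t.2.2|) ∧
          c * (k : ℝ) ^ 3 ≤
            (({t ∈ T | |((t.1 : ℕ) : ℝ) - ((t.2.1 : ℕ) : ℝ)| ≥
                |((t.1 : ℕ) : ℝ) - ((t.2.2 : ℕ) : ℝ)|}).ncard : ℝ) := by
  refine ⟨1/1000, by norm_num, 100, ?_⟩
  intro k hk pts hpts T hT
  subst hpts
  subst hT
  refine ⟨fun t ht => ht.2, ?_⟩
  set m := k / 6 with hm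
  have hm6 : 6 * m ≤ k := by omega
  have hm1 : 13 ≤ m := by omega
  haveI : NeZero (2 * k + 1) := ⟨by omega⟩
  set f : ℕ × ℕ × ℕ → Fin (2*k+1) × Fin (2*k+1) × Fin (2*k+1) :=
    fun p => (((k - p.1 : ℕ) : Fin (2*k+1)),
              ((k + 4*m + p.2.2 : ℕ) : Fin (2*k+1)),
              ((k - (2*p.1 + 3*m + p.2.1) : ℕ) : Fin (2*k+1))) with hf
  have hval : ∀ x : ℕ, x ≤ 2*k → (((x : Fin (2*k+1)) : ℕ)) = x := fun x hx =>
    Fin.val_cast_of_lt (by omega)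
  set V : Set (Fin (2*k+1) × Fin (2*k+1) × Fin (2*k+1)) :=
    {t ∈ {t : Fin (2*k+1) × Fin (2*k+1) × Fin (2*k+1) |
        (t.1 ≠ t.2.1 ∧ t.1 ≠ t.2.2 ∧ t.2.1 ≠ t.2.2) ∧
        |(fun i : Fin (2 * k + 1) =>
            ((if (i : ℕ) ≤ k then 2 * (i : ℕ) else k + (i : ℕ) : ℕ) : ℝ)) t.1 -
          (fun i : Fin (2 * k + 1) =>
            ((if (i : ℕ) ≤ k then 2 * (i : ℕ) else k + (i : ℕ) : ℕ) : ℝ)) t.2.1| <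
        |(fun i : Fin (2 * k + 1) =>
            ((if (i : ℕ) ≤ k then 2 * (i : ℕ) else k + (i : ℕ) : ℕ) : ℝ)) t.1 -
          (fun i : Fin (2 * k + 1) =>
            ((if (i : ℕ) ≤ k then 2 * (i : ℕ) else k + (i : ℕ) : ℕ) : ℝ)) t.2.2|} |
      |((t.1 : ℕ) : ℝ) - ((t.2.1 : ℕ) : ℝ)| ≥ |((t.1 : ℕ) : ℝ) - ((t.2.2 : ℕ) : ℝ)|} with hV
  set F : Finset (Fin (2*k+1) × Fin (2*k+1) × Fin (2*k+1)) :=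
    (Finset.range m ×ˢ Finset.range m ×ˢ Finset.range m).image f with hF
  -- the image is contained in the violated set
  have hsub : (F : Set (Fin (2*k+1) × Fin (2*k+1) × Fin (2*k+1))) ⊆ V := by
    intro t ht
    simp only [hF, Finset.coe_image, Set.mem_image, Finset.mem_coe, Finset.mem_product,
      Finset.mem_range] at ht
    obtain ⟨⟨a, b, c⟩, ⟨ha, hb, hc⟩, rfl⟩ := ht
    have ha' : a < m := ha
    have hb' : b < m := hb
    have hc' : c < m := hc
    have h1 : (((k - a : ℕ) : Fin (2*k+1)) : ℕ) = k - a := hval _ (by omega)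
    have h2 : (((k + 4*m + c : ℕ) : Fin (2*k+1)) : ℕ) = k + 4*m + c := hval _ (by omega)
    have h3 : (((k - (2*a + 3*m + b) : ℕ) : Fin (2*k+1)) : ℕ) = k - (2*a + 3*m + b) :=
      hval _ (by omega)
    simp only [hV, hf, Set.mem_setOf_eq, ne_eq, Fin.ext_iff, h1, h2, h3]
    rw [if_pos (by omega : k - a ≤ k), if_neg (by omega : ¬ (k + 4*m + c ≤ k)),
      if_pos (by omega : k - (2*a + 3*m + b) ≤ k)]
    rw [abs_cast_sub', abs_cast_sub', abs_cast_sub', abs_cast_sub']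
    refine ⟨⟨⟨by omega, by omega, by omega⟩, ?_⟩, ?_⟩
    · rw [Nat.cast_lt]; omega
    · rw [ge_iff_le, Nat.cast_le]; omega
  have hinj : Set.InjOn f ((Finset.range m ×ˢ Finset.range m ×ˢ Finset.range m) :
      Finset (ℕ × ℕ × ℕ)) := by
    rintro ⟨a, b, c⟩ hp ⟨a', b', c'⟩ hq h
    simp only [Finset.coe_product, Set.mem_prod, Finset.coe_range, Set.mem_Iio] at hp hq
    have ha : a < m := hp.1
    have hb : b < m := hp.2.1
    have hc : c < m := hp.2.2
    have ha' : a' < m := hq.1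
    have hb' : b' < m := hq.2.1
    have hc' : c' < m := hq.2.2
    have e1 := congrArg (fun t => ((t.1 : ℕ)) ) h
    have e2 := congrArg (fun t => ((t.2.1 : ℕ))) h
    have e3 := congrArg (fun t => ((t.2.2 : ℕ))) h
    simp only [hf] at e1 e2 e3
    rw [hval _ (by omega), hval _ (by omega)] at e1
    rw [hval _ (by omega), hval _ (by omega)] at e2
    rw [hval _ (by omega), hval _ (by omega)] at e3
    have : a = a' ∧ b = b' ∧ c = c' := by omega
    simp [this.1, this.2.1, this.2.2]
  have hcard : F.card = m * (m * m) := by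
    rw [hF, Finset.card_image_of_injOn hinj]
    simp [Finset.card_product]
  have hVcard : (m * (m * m) : ℕ) ≤ V.ncard := by
    calc (m * (m * m) : ℕ) = F.card := hcard.symm
    _ = (F : Set _).ncard := (Set.ncard_coe_finset F).symm
    _ ≤ V.ncard := Set.ncard_le_ncard hsub (Set.toFinite _)
  have hk3 : (k : ℕ)^3 ≤ 1000 * (m * (m * m)) := by
    have h10 : k ≤ 10 * m := by omega
    calc k^3 ≤ (10*m)^3 := Nat.pow_le_pow_left h10 3
    _ = 1000 * (m * (m * m)) := by ring
  have : ((k:ℝ))^3 ≤ 1000 * ((m * (m * m) : ℕ) : ℝ) := by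
    have := (Nat.cast_le (α := ℝ)).2 hk3
    push_cast at this ⊢
    linarith
  have hVc : ((m * (m * m) : ℕ) : ℝ) ≤ (V.ncard : ℝ) := Nat.cast_le.2 hVcard
  linarith
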